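/- arXiv:2006.10138 — 3 statements merged into one kernel-verified Lean document; each statement's English description precedes it below -/
import Mathlib

section
/- (Lemma 1.) Let E be a real Hilbert space, n ≥ 1 an integer, λ > 0, μ > 0, and let ℓ_1, …, ℓ_n : E → ℝ be differentiable. For p in the probability simplex Δ_n define the weighted loss F_p(w) = Σ_{i=1}^n p_i ℓ_i(w), and define F_dro(w) = λ log((1/n) Σ_{i=1}^n exp(ℓ_i(w)/λ)). Assume that for every p ∈ Δ_n the function F_p is bounded below and satisfies the μ-PL condition, i.e. 2μ(F_p(w) − inf_{w'} F_p(w')) ≤ ‖∇F_p(w)‖² for all w ∈ E. Then F_dro is bounded below and satisfies the μ-PL condition: 2μ(F_dro(w) − inf_{w'} F_dro(w')) ≤ ‖∇F_dro(w)‖² for all w ∈ E. -/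
open Finset Real

lemma jensen_log {n : ℕ} (p x : Fin n → ℝ) (hp : ∀ i, 0 ≤ p i)
    (hsum : ∑ i, p i = 1) (hx : ∀ i, 0 < x i) :
    ∑ i, p i * Real.log (x i) ≤ Real.log (∑ i, p i * x i) := by
  have := strictConcaveOn_log_Ioi.concaveOn.le_map_sum
    (t := Finset.univ) (w := p) (p := x) (fun i _ => hp i) hsum (fun i _ => hx i)
  simpa [smul_eq_mul] using this

/-- Lemma 1: if for every `p` in the probability simplex the weighted loss
`F_p(w) = Σ_i p_i ℓ_i(w)` is bounded below and satisfies the `μ`-PL condition,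
then the DRO objective `F_dro(w) = λ log((1/n) Σ_i exp(ℓ_i(w)/λ))` is bounded
below and satisfies the `μ`-PL condition. -/
theorem dro_PL_of_weighted_PL (E : Type*) [NormedAddCommGroup E]
    [InnerProductSpace ℝ E] [CompleteSpace E]
    (n : ℕ) (hn : 1 ≤ n) (lam μ : ℝ) (hlam : 0 < lam) (hμ : 0 < μ)
    (ℓ : Fin n → E → ℝ) (hdiff : ∀ i, Differentiable ℝ (ℓ i))
    (hPL : ∀ p : Fin n → ℝ, (∀ i, 0 ≤ p i) → ∑ i, p i = 1 →
      BddBelow (Set.range fun w : E => ∑ i, p i * ℓ i w) ∧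
      ∀ w : E, 2 * μ * ((∑ i, p i * ℓ i w) - ⨅ w' : E, ∑ i, p i * ℓ i w')
        ≤ ‖gradient (fun w : E => ∑ i, p i * ℓ i w) w‖ ^ 2) :
    BddBelow (Set.range fun w : E =>
        lam * Real.log ((1 / n) * ∑ i, Real.exp (ℓ i w / lam))) ∧
    ∀ w : E,
      2 * μ * ((lam * Real.log ((1 / n) * ∑ i, Real.exp (ℓ i w / lam))) -
          ⨅ w' : E, lam * Real.log ((1 / n) * ∑ i, Real.exp (ℓ i w' / lam)))
        ≤ ‖gradient (fun w : E =>
            lam * Real.log ((1 / n) * ∑ i, Real.exp (ℓ i w / lam))) w‖ ^ 2 := by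
  have hn0 : 0 < (n : ℝ) := by exact_mod_cast hn
  haveI : Nonempty (Fin n) := ⟨⟨0, hn⟩⟩
  have hS : ∀ w : E, 0 < ∑ i, Real.exp (ℓ i w / lam) :=
    fun w => Finset.sum_pos (fun i _ => Real.exp_pos _) Finset.univ_nonempty
  -- the key Jensen lower bound for any probability vector p with positive entries is below;
  -- for boundedness we use the uniform vector.
  constructor
  · -- bounded below
    set u : Fin n → ℝ := fun _ => (n : ℝ)⁻¹ with hu
    have hu0 : ∀ i, 0 ≤ u i := fun i => by positivity
    have husum : ∑ i : Fin n, u i = 1 := by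
      simp [hu, Finset.sum_const, Finset.card_univ, mul_inv_cancel₀ hn0.ne']
    obtain ⟨m, hm⟩ := (hPL u hu0 husum).1
    refine ⟨m, ?_⟩
    rintro y ⟨w, rfl⟩
    have h1 : m ≤ ∑ i, u i * ℓ i w := hm ⟨w, rfl⟩
    have h2 : ∑ i, u i * ℓ i w ≤ lam * Real.log ((1 / n) * ∑ i, Real.exp (ℓ i w / lam)) := by
      have hj := jensen_log u (fun i => Real.exp (ℓ i w / lam)) hu0 husum
        (fun i => Real.exp_pos _)
      simp only [Real.log_exp] at hj
      have heq : ∑ i, u i * Real.exp (ℓ i w / lam)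
          = (1 / n) * ∑ i, Real.exp (ℓ i w / lam) := by
        rw [Finset.mul_sum]
        refine Finset.sum_congr rfl fun i _ => by rw [hu]; ring
      rw [heq] at hj
      have hsum' : ∑ i, u i * (ℓ i w / lam) = (∑ i, u i * ℓ i w) / lam := by
        rw [Finset.sum_div]; exact Finset.sum_congr rfl fun i _ => by ring
      rw [hsum'] at hj
      calc ∑ i, u i * ℓ i w = lam * ((∑ i, u i * ℓ i w) / lam) := by
            field_simp
        _ ≤ lam * Real.log ((1 / n) * ∑ i, Real.exp (ℓ i w / lam)) :=
            mul_le_mul_of_nonneg_left hj hlam.le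
    exact h1.trans h2
  · intro w
    set S : ℝ := ∑ i, Real.exp (ℓ i w / lam) with hSdef
    have hSpos : 0 < S := hS w
    set p : Fin n → ℝ := fun i => Real.exp (ℓ i w / lam) / S with hpdef
    have hp0 : ∀ i, 0 < p i := fun i => div_pos (Real.exp_pos _) hSpos
    have hpsum : ∑ i, p i = 1 := by
      rw [hpdef]; rw [← Finset.sum_div, ← hSdef, div_self hSpos.ne']
    obtain ⟨hbp, hplw⟩ := hPL p (fun i => (hp0 i).le) hpsum
    set c : ℝ := lam * ∑ i, p i * Real.log (n * p i) with hcdef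
    -- Donsker–Varadhan type inequality
    have h_dv : ∀ w' : E, (∑ i, p i * ℓ i w') - c
        ≤ lam * Real.log ((1 / n) * ∑ i, Real.exp (ℓ i w' / lam)) := by
      intro w'
      have hj := jensen_log p (fun i => Real.exp (ℓ i w' / lam) / (n * p i))
        (fun i => (hp0 i).le) hpsum
        (fun i => div_pos (Real.exp_pos _) (by positivity))
      have heq : ∑ i, p i * (Real.exp (ℓ i w' / lam) / (n * p i))
          = (1 / n) * ∑ i, Real.exp (ℓ i w' / lam) := by
        rw [Finset.mul_sum]
        refine Finset.sum_congr rfl fun i _ => ?_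
        have := (hp0 i).ne'
        field_simp
      rw [heq] at hj
      have hlog : ∀ i, Real.log (Real.exp (ℓ i w' / lam) / (n * p i))
          = ℓ i w' / lam - Real.log (n * p i) := by
        intro i
        rw [Real.log_div (Real.exp_pos _).ne' (by positivity), Real.log_exp]
      simp only [hlog] at hj
      have hsplit : ∑ i, p i * (ℓ i w' / lam - Real.log (n * p i))
          = (∑ i, p i * ℓ i w') / lam - ∑ i, p i * Real.log (n * p i) := by
        calc ∑ i, p i * (ℓ i w' / lam - Real.log (n * p i))
            = ∑ i, (p i * ℓ i w' / lam - p i * Real.log (n * p i)) :=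
              Finset.sum_congr rfl fun i _ => by ring
          _ = _ := by rw [Finset.sum_sub_distrib, Finset.sum_div]
      rw [hsplit] at hj
      have hmul := mul_le_mul_of_nonneg_left hj hlam.le
      rw [mul_sub] at hmul
      have hA : lam * ((∑ i, p i * ℓ i w') / lam) = ∑ i, p i * ℓ i w' := by
        field_simp
      rw [hcdef]
      linarith [hmul, hA]
    -- equality at w
    have h_eq : (∑ i, p i * ℓ i w) - c
        = lam * Real.log ((1 / n) * ∑ i, Real.exp (ℓ i w / lam)) := by
      have hlogp : ∀ i, Real.log (n * p i) = Real.log n + ℓ i w / lam - Real.log S := by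
        intro i
        rw [hpdef]
        rw [Real.log_mul hn0.ne' (hp0 i).ne',
          Real.log_div (Real.exp_pos _).ne' hSpos.ne', Real.log_exp]
        ring
      have hsum : ∑ i, p i * Real.log (n * p i)
          = Real.log n + (∑ i, p i * ℓ i w) / lam - Real.log S := by
        calc ∑ i, p i * Real.log (n * p i)
            = ∑ i, (p i * Real.log n + p i * (ℓ i w / lam) - p i * Real.log S) := by
              refine Finset.sum_congr rfl fun i _ => ?_
              rw [hlogp i]; ring
          _ = Real.log n + (∑ i, p i * ℓ i w) / lam - Real.log S := by
              rw [Finset.sum_sub_distrib, Finset.sum_add_distrib, ← Finset.sum_mul,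
                ← Finset.sum_mul, hpsum, Finset.sum_div]
              congr 1
              · congr 1
                · ring
                · exact Finset.sum_congr rfl fun i _ => by ring
              · ring
      have hlogFd : Real.log ((1 / n) * S) = Real.log S - Real.log n := by
        rw [Real.log_mul (by positivity) hSpos.ne', Real.log_div one_ne_zero hn0.ne',
          Real.log_one]
        ring
      rw [hcdef, hsum, ← hSdef, hlogFd]
      field_simp
      ring
    -- gradient equality
    have h_grad : gradient (fun w' : E =>
        lam * Real.log ((1 / n) * ∑ i, Real.exp (ℓ i w' / lam))) w
        = gradient (fun w' : E => ∑ i, p i * ℓ i w') w := by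
      set D : E →L[ℝ] ℝ := ∑ i, p i • fderiv ℝ (ℓ i) w with hDdef
      have hFp : HasFDerivAt (fun w' : E => ∑ i, p i * ℓ i w') D w :=
        HasFDerivAt.fun_sum fun i _ => ((hdiff i w).hasFDerivAt.const_mul (p i))
      have h1 : ∀ i, HasFDerivAt (fun w' : E => ℓ i w' / lam)
          (lam⁻¹ • fderiv ℝ (ℓ i) w) w := by
        intro i
        have := (hdiff i w).hasFDerivAt.const_mul lam⁻¹
        exact this.congr_of_eventuallyEq
          (Filter.Eventually.of_forall fun w' => div_eq_inv_mul _ _)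
      have h3 : HasFDerivAt (fun w' : E => ∑ i, Real.exp (ℓ i w' / lam))
          (∑ i, Real.exp (ℓ i w / lam) • (lam⁻¹ • fderiv ℝ (ℓ i) w)) w :=
        HasFDerivAt.fun_sum fun i _ => (h1 i).exp
      have h4 := h3.const_mul (1 / (n : ℝ))
      have hval : (0:ℝ) < (1 / n) * ∑ i, Real.exp (ℓ i w / lam) := by positivity
      have h5 := h4.log hval.ne'
      have h6 := h5.const_mul lam
      have hD' : lam • (((1 / (n:ℝ)) * ∑ i, Real.exp (ℓ i w / lam))⁻¹ •
          ((1 / (n:ℝ)) • ∑ i, Real.exp (ℓ i w / lam) • (lam⁻¹ • fderiv ℝ (ℓ i) w))) = D := by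
        ext v
        simp only [hDdef, ContinuousLinearMap.coe_smul', Pi.smul_apply,
          ContinuousLinearMap.coe_sum', Finset.sum_apply, smul_eq_mul, Finset.mul_sum,
          ← hSdef]
        refine Finset.sum_congr rfl fun i _ => ?_
        rw [hpdef]
        have h1n : ((1:ℝ) / n) ≠ 0 := by positivity
        field_simp
      rw [hD'] at h6
      unfold gradient
      rw [h6.fderiv, hFp.fderiv]
    rw [h_grad]
    have hinf : (⨅ w' : E, ∑ i, p i * ℓ i w') - c
        ≤ ⨅ w' : E, lam * Real.log ((1 / n) * ∑ i, Real.exp (ℓ i w' / lam)) := by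
      refine le_ciInf fun w' => ?_
      have h1 : (⨅ w' : E, ∑ i, p i * ℓ i w') ≤ ∑ i, p i * ℓ i w' := ciInf_le hbp w'
      linarith [h_dv w']
    have hfin := hplw w
    have hmono : (lam * Real.log ((1 / n) * ∑ i, Real.exp (ℓ i w / lam))) -
        (⨅ w' : E, lam * Real.log ((1 / n) * ∑ i, Real.exp (ℓ i w' / lam)))
        ≤ (∑ i, p i * ℓ i w) - ⨅ w' : E, ∑ i, p i * ℓ i w' := by
      linarith [hinf, h_eq]
    nlinarith [hmono, hfin]
end

section
/- (Deterministic form of Lemma 6, intermediate inequality.) Let E be a real Hilbert space, φ : E → ℝ differentiable with ∇φ Lipschitz with constant L ≥ 0, r : E → ℝ convex, η > 0, and w, d ∈ E. Suppose w⁺ is a proximal point of w − ηd for step size η and regularizer r, i.e. w⁺ minimizes u ↦ (1/(2η))‖u − (w − ηd)‖² + r(u) over E. Then φ(w⁺) + r(w⁺) ≤ φ(w) + r(w) + (η/2)‖∇φ(w) − d‖² − (1/(2η) − L/2)‖w⁺ − w‖². -/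
open Set InnerProductSpace

/-- Descent lemma: smooth function with Lipschitz gradient. -/
lemma descent_lemma {E : Type*} [NormedAddCommGroup E] [InnerProductSpace ℝ E]
    [CompleteSpace E] (φ : E → ℝ) (L : ℝ) (hφ : Differentiable ℝ φ)
    (hLip : ∀ x y : E, ‖gradient φ x - gradient φ y‖ ≤ L * ‖x - y‖)
    (w y : E) :
    φ y ≤ φ w + ⟪gradient φ w, y - w⟫_ℝ + L / 2 * ‖y - w‖ ^ 2 := by
  set v := y - w with hv
  set G := gradient φ w with hG
  set K := L * ‖v‖ ^ 2 with hK
  have hc : ∀ t : ℝ, HasDerivAt (fun t : ℝ => w + t • v) v t := by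
    intro t
    simpa using (HasDerivAt.const_add w ((hasDerivAt_id t).smul_const v))
  have hgd : ∀ t : ℝ, HasDerivAt (fun t : ℝ => φ (w + t • v))
      ⟪gradient φ (w + t • v), v⟫_ℝ t := by
    intro t
    have h1 : HasFDerivAt φ (toDual ℝ E (gradient φ (w + t • v))) (w + t • v) :=
      (hφ (w + t • v)).hasGradientAt
    have := h1.comp_hasDerivAt t (hc t)
    simpa [Function.comp_def] using this
  set ψ : ℝ → ℝ := fun t => φ (w + t • v) - t * ⟪G, v⟫_ℝ - K * t ^ 2 / 2 with hψ
  have hψd : ∀ t : ℝ, HasDerivAt ψ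
      (⟪gradient φ (w + t • v), v⟫_ℝ - ⟪G, v⟫_ℝ - K * t) t := by
    intro t
    have h2 : HasDerivAt (fun t : ℝ => t * ⟪G, v⟫_ℝ) ⟪G, v⟫_ℝ t := by
      simpa using (hasDerivAt_id t).mul_const ⟪G, v⟫_ℝ
    have h3 : HasDerivAt (fun t : ℝ => K * t ^ 2 / 2) (K * t) t := by
      have := ((hasDerivAt_pow 2 t).const_mul K).div_const 2
      exact this.congr_deriv (by rw [show (2:ℕ) - 1 = 1 from rfl]; push_cast; ring)
    exact ((hgd t).sub h2).sub h3
  have hanti : AntitoneOn ψ (Ici (0:ℝ)) := by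
    apply AntitoneOn.mono (antitoneOn_of_deriv_nonpos (convex_Ici 0) ?_ ?_ ?_)
        (le_refl _)
    · exact Continuous.continuousOn (by
        exact continuous_iff_continuousAt.2 fun t => (hψd t).continuousAt)
    · exact fun t ht => ((hψd t).differentiableAt).differentiableWithinAt
    · intro t ht
      rw [interior_Ici] at ht
      rw [(hψd t).deriv]
      have h4 : ⟪gradient φ (w + t • v) - G, v⟫_ℝ ≤ K * t := by
        calc ⟪gradient φ (w + t • v) - G, v⟫_ℝ
            ≤ ‖gradient φ (w + t • v) - G‖ * ‖v‖ := real_inner_le_norm _ _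
          _ ≤ (L * ‖(w + t • v) - w‖) * ‖v‖ :=
              mul_le_mul_of_nonneg_right (hLip _ _) (norm_nonneg v)
          _ = K * t := by
              have : ‖(w + t • v) - w‖ = t * ‖v‖ := by
                simp [norm_smul, abs_of_pos ht.out]
              rw [this, hK]; ring
      rw [inner_sub_left] at h4
      linarith
  have h01 := hanti (self_mem_Ici) (mem_Ici.2 zero_le_one) zero_le_one
  have e0 : ψ 0 = φ w := by simp [hψ]
  have e1 : ψ 1 = φ y - ⟪G, v⟫_ℝ - K / 2 := by simp [hψ, hv]
  rw [e0, e1] at h01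
  have : K = L * ‖y - w‖ ^ 2 := by rw [hK, hv]
  nlinarith [h01]

/-- Deterministic form of Lemma 6 (intermediate inequality): one proximal step
from `w` along an approximate gradient `d` decreases the composite objective
`φ + r` up to the gradient-estimation error `‖∇φ(w) − d‖²`. -/
theorem prox_step_descent (E : Type*) [NormedAddCommGroup E]
    [InnerProductSpace ℝ E] [CompleteSpace E]
    (φ : E → ℝ) (L : ℝ) (hL : 0 ≤ L) (hφ : Differentiable ℝ φ)
    (hLip : ∀ x y : E, ‖gradient φ x - gradient φ y‖ ≤ L * ‖x - y‖)
    (r : E → ℝ) (hr : ConvexOn ℝ Set.univ r) (η : ℝ) (hη : 0 < η)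
    (w d wplus : E)
    (hmin : ∀ u : E,
      (1 / (2 * η)) * ‖wplus - (w - η • d)‖ ^ 2 + r wplus
        ≤ (1 / (2 * η)) * ‖u - (w - η • d)‖ ^ 2 + r u) :
    φ wplus + r wplus
      ≤ φ w + r w + (η / 2) * ‖gradient φ w - d‖ ^ 2
        - (1 / (2 * η) - L / 2) * ‖wplus - w‖ ^ 2 := by
  set v := w - η • d with hv
  set a := wplus - v with ha
  set b := w - wplus with hb
  set G := gradient φ w with hG
  have h2η : (0:ℝ) < 2 * η := by linarith
  -- prox inequality with convexity
  have key : ∀ t : ℝ, t ∈ Ioc (0:ℝ) 1 →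
      r wplus ≤ r w + (1 / η) * ⟪a, b⟫_ℝ + t * (‖b‖ ^ 2 / (2 * η)) := by
    intro t ht
    have ht0 := ht.1
    have h1 := hmin (wplus + t • b)
    have hconv : r (wplus + t • b) ≤ (1 - t) * r wplus + t * r w := by
      have := hr.2 (mem_univ wplus) (mem_univ w) (by linarith [ht.2] : (0:ℝ) ≤ 1 - t)
        ht.1.le (by ring)
      have he : (1 - t) • wplus + t • w = wplus + t • b := by
        rw [hb]; module
      rw [he] at this
      simpa using this
    have hexp : ‖wplus + t • b - v‖ ^ 2 = ‖a‖ ^ 2 + 2 * t * ⟪a, b⟫_ℝ + t ^ 2 * ‖b‖ ^ 2 := by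
      have : wplus + t • b - v = a + t • b := by rw [ha]; abel
      rw [this, norm_add_sq_real, real_inner_smul_right, norm_smul]
      simp [mul_pow, abs_of_nonneg ht.1.le]
      ring
    rw [hexp] at h1
    have hmain : (1 / (2 * η)) * ‖a‖ ^ 2 + r wplus
        ≤ (1 / (2 * η)) * (‖a‖ ^ 2 + 2 * t * ⟪a, b⟫_ℝ + t ^ 2 * ‖b‖ ^ 2)
          + ((1 - t) * r wplus + t * r w) := h1.trans (by linarith)
    have heq : (1 / (2 * η)) * (‖a‖ ^ 2 + 2 * t * ⟪a, b⟫_ℝ + t ^ 2 * ‖b‖ ^ 2)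
        = (1 / (2 * η)) * ‖a‖ ^ 2
          + t * ((1 / η) * ⟪a, b⟫_ℝ + t * (‖b‖ ^ 2 / (2 * η))) := by
      field_simp
      ring
    rw [heq] at hmain
    have h5 : t * r wplus ≤ t * (r w + (1 / η) * ⟪a, b⟫_ℝ + t * (‖b‖ ^ 2 / (2 * η))) := by
      nlinarith [hmain]
    exact le_of_mul_le_mul_left (by linarith) ht0
  have hrle : r wplus ≤ r w + (1 / η) * ⟪a, b⟫_ℝ := by
    have hcont : Continuous (fun t : ℝ =>
        r w + (1 / η) * ⟪a, b⟫_ℝ + t * (‖b‖ ^ 2 / (2 * η))) := by fun_prop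
    have htend : Filter.Tendsto (fun t : ℝ => r w + (1 / η) * ⟪a, b⟫_ℝ + t * (‖b‖ ^ 2 / (2 * η)))
        (nhdsWithin 0 (Ioi 0)) (nhds (r w + (1 / η) * ⟪a, b⟫_ℝ)) := by
      have := (hcont.tendsto 0).mono_left (nhdsWithin_le_nhds (s := Ioi (0:ℝ)))
      simpa using this
    refine ge_of_tendsto htend ?_
    filter_upwards [Ioc_mem_nhdsGT_of_mem (by norm_num : (0:ℝ) ∈ Ico (0:ℝ) 1)] with t ht
    exact key t ht
  -- rewrite inner product
  have hab : ⟪a, b⟫_ℝ = -‖wplus - w‖ ^ 2 - η * ⟪d, wplus - w⟫_ℝ := by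
    have ha' : a = (wplus - w) + η • d := by rw [ha, hv]; abel
    have hb' : b = -(wplus - w) := by rw [hb]; abel
    rw [ha', hb', inner_neg_right, inner_add_left, real_inner_smul_left,
      real_inner_self_eq_norm_sq]
    ring
  rw [hab] at hrle
  have hr2 : r wplus ≤ r w - (1 / η) * ‖wplus - w‖ ^ 2 - ⟪d, wplus - w⟫_ℝ := by
    have he2 : (1 / η) * (-‖wplus - w‖ ^ 2 - η * ⟪d, wplus - w⟫_ℝ)
        = -((1 / η) * ‖wplus - w‖ ^ 2) - ⟪d, wplus - w⟫_ℝ := by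
      field_simp
    rw [he2] at hrle
    linarith
  have hdesc := descent_lemma φ L hφ hLip w wplus
  rw [← hG] at hdesc
  have hyoung : ⟪G, wplus - w⟫_ℝ - ⟪d, wplus - w⟫_ℝ
      ≤ η / 2 * ‖G - d‖ ^ 2 + 1 / (2 * η) * ‖wplus - w‖ ^ 2 := by
    have h1 : ⟪G - d, wplus - w⟫_ℝ ≤ ‖G - d‖ * ‖wplus - w‖ := real_inner_le_norm _ _
    rw [inner_sub_left] at h1
    have h2 : η / 2 * ‖G - d‖ ^ 2 + 1 / (2 * η) * ‖wplus - w‖ ^ 2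
        - ‖G - d‖ * ‖wplus - w‖ = (η * ‖G - d‖ - ‖wplus - w‖) ^ 2 / (2 * η) := by
      field_simp
      ring
    nlinarith [h1, div_nonneg (sq_nonneg (η * ‖G - d‖ - ‖wplus - w‖)) h2η.le, h2]
  have hS : (1 / η) * ‖wplus - w‖ ^ 2
      = 1 / (2 * η) * ‖wplus - w‖ ^ 2 + 1 / (2 * η) * ‖wplus - w‖ ^ 2 := by
    field_simp
    ring
  linarith [hdesc, hr2, hyoung, hS]
end

section
/- (Single-step variance recursion, the core estimate of Lemma 7.) Let (Ω, 𝒜, P) be a probability space and H a real Hilbert space. Let X, Y : Ω → H be strongly measurable with ∫‖X‖² dP < ∞ and ∫‖Y‖² dP < ∞, and set ḡ' := ∫ X dP and ḡ := ∫ Y dP. Let u ∈ H, a ∈ [0,1], and σ, C, D ≥ 0 be such that ∫‖X − ḡ'‖² dP ≤ σ² and ∫‖X − Y‖² dP ≤ C² D². Then ∫‖X + (1−a)(u − Y) − ḡ'‖² dP ≤ 2a²σ² + (1−a)²‖u − ḡ‖² + 2(1−a)² C² D². -/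
open MeasureTheory

lemma expand_sq {Ω : Type*} [MeasurableSpace Ω] {P : Measure Ω} [IsProbabilityMeasure P]
    {H : Type*} [NormedAddCommGroup H] [InnerProductSpace ℝ H] [CompleteSpace H]
    {f : Ω → H} (hf : MemLp f 2 P) (c : H) :
    ∫ ω, ‖c + f ω‖ ^ 2 ∂P
      = ‖c‖ ^ 2 + 2 * inner ℝ c (∫ ω, f ω ∂P) + ∫ ω, ‖f ω‖ ^ 2 ∂P := by
  have hfi : Integrable f P := hf.integrable one_le_two
  have hf2 : Integrable (fun ω => ‖f ω‖ ^ 2) P :=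
    (memLp_two_iff_integrable_sq_norm hf.aestronglyMeasurable).mp hf
  have hinner : Integrable (fun ω => (2 : ℝ) * inner ℝ c (f ω)) P :=
    (hfi.const_inner c).const_mul 2
  have key : ∀ ω, ‖c + f ω‖ ^ 2 = ‖c‖ ^ 2 + 2 * inner ℝ c (f ω) + ‖f ω‖ ^ 2 := fun ω =>
    norm_add_sq_real c (f ω)
  simp_rw [key]
  have h1 : Integrable (fun ω => ‖c‖ ^ 2 + 2 * inner ℝ c (f ω)) P :=
    (integrable_const _).add hinner
  rw [integral_add h1 hf2, integral_add (integrable_const _) hinner, integral_const,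
    integral_const_mul, integral_inner hfi, probReal_univ]
  simp

lemma var_le_second_moment {Ω : Type*} [MeasurableSpace Ω] {P : Measure Ω}
    [IsProbabilityMeasure P]
    {H : Type*} [NormedAddCommGroup H] [InnerProductSpace ℝ H] [CompleteSpace H]
    {f : Ω → H} (hf : MemLp f 2 P) :
    ∫ ω, ‖f ω - ∫ ω', f ω' ∂P‖ ^ 2 ∂P ≤ ∫ ω, ‖f ω‖ ^ 2 ∂P := by
  have h : ∀ ω, f ω - (∫ ω', f ω' ∂P) = (-(∫ ω', f ω' ∂P)) + f ω := fun ω => by abel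
  simp_rw [h]
  rw [expand_sq hf]
  have : (2 : ℝ) * inner ℝ (-(∫ ω', f ω' ∂P)) (∫ ω, f ω ∂P)
      = -(2 * ‖∫ ω, f ω ∂P‖ ^ 2) := by
    rw [inner_neg_left, real_inner_self_eq_norm_sq]; ring
  rw [this, norm_neg]
  nlinarith [sq_nonneg ‖∫ ω, f ω ∂P‖]

/-- Single-step variance recursion (core estimate of Lemma 7): the STORM-type
update `X + (1−a)(u − Y)` has second moment about `∫X` bounded by
`2a²σ² + (1−a)²‖u − ∫Y‖² + 2(1−a)²C²D²`. -/
theorem storm_variance_recursion (Ω : Type*) [MeasurableSpace Ω]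
    (P : Measure Ω) [IsProbabilityMeasure P]
    (H : Type*) [NormedAddCommGroup H] [InnerProductSpace ℝ H] [CompleteSpace H]
    (X Y : Ω → H)
    (hX : AEStronglyMeasurable X P) (hY : AEStronglyMeasurable Y P)
    (hX2 : Integrable (fun ω => ‖X ω‖ ^ 2) P)
    (hY2 : Integrable (fun ω => ‖Y ω‖ ^ 2) P)
    (u : H) (a σ C D : ℝ) (ha0 : 0 ≤ a) (ha1 : a ≤ 1)
    (hσ : 0 ≤ σ) (hC : 0 ≤ C) (hD : 0 ≤ D)
    (hvar : ∫ ω, ‖X ω - ∫ ω', X ω' ∂P‖ ^ 2 ∂P ≤ σ ^ 2)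
    (hXY : ∫ ω, ‖X ω - Y ω‖ ^ 2 ∂P ≤ C ^ 2 * D ^ 2) :
    ∫ ω, ‖X ω + (1 - a) • (u - Y ω) - ∫ ω', X ω' ∂P‖ ^ 2 ∂P
      ≤ 2 * a ^ 2 * σ ^ 2 + (1 - a) ^ 2 * ‖u - ∫ ω', Y ω' ∂P‖ ^ 2
        + 2 * (1 - a) ^ 2 * C ^ 2 * D ^ 2 := by
  set m := ∫ ω', X ω' ∂P with hm
  set n := ∫ ω', Y ω' ∂P with hn
  have hXm : MemLp X 2 P := (memLp_two_iff_integrable_sq_norm hX).mpr hX2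
  have hYm : MemLp Y 2 P := (memLp_two_iff_integrable_sq_norm hY).mpr hY2
  have hXi : Integrable X P := hXm.integrable one_le_two
  have hYi : Integrable Y P := hYm.integrable one_le_two
  -- the centered fluctuation
  set f : Ω → H := fun ω => X ω - m - (1 - a) • (Y ω - n) with hfdef
  have hfm : MemLp f 2 P := by
    exact (hXm.sub (memLp_const m)).sub (((hYm.sub (memLp_const n)).const_smul (1 - a)))
  have hf0 : ∫ ω, f ω ∂P = 0 := by
    have h1 : Integrable (fun ω => X ω - m) P := hXi.sub (integrable_const m)
    have h2 : Integrable (fun ω => (1 - a) • (Y ω - n)) P :=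
      ((hYi.sub (integrable_const n)).smul (1 - a))
    rw [hfdef]
    rw [integral_sub h1 h2, integral_sub hXi (integrable_const m),
      integral_smul, integral_sub hYi (integrable_const n)]
    simp [← hm, ← hn]
  set c : H := (1 - a) • (u - n) with hc
  have hpt : ∀ ω, X ω + (1 - a) • (u - Y ω) - m = c + f ω := by
    intro ω
    rw [hc, hfdef]
    simp only [smul_sub]
    abel
  simp_rw [hpt]
  rw [expand_sq hfm, hf0, inner_zero_right]
  -- bound ∫ ‖f‖²
  set V : Ω → H := fun ω => X ω - Y ω with hV
  have hVm : MemLp V 2 P := hXm.sub hYm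
  have hVint : ∫ ω, V ω ∂P = m - n := by
    rw [hV]; rw [integral_sub hXi hYi]
  have hgpt : ∀ ω, f ω = a • (X ω - m) + (1 - a) • (V ω - (m - n)) := by
    intro ω
    rw [hfdef, hV]
    simp only [smul_sub, sub_smul, one_smul]
    abel
  have hbound : ∀ ω, ‖f ω‖ ^ 2
      ≤ 2 * a ^ 2 * ‖X ω - m‖ ^ 2 + 2 * (1 - a) ^ 2 * ‖V ω - (m - n)‖ ^ 2 := by
    intro ω
    rw [hgpt ω]
    have h1 := norm_add_le (a • (X ω - m)) ((1 - a) • (V ω - (m - n)))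
    have h2 : ‖a • (X ω - m)‖ = a * ‖X ω - m‖ := by
      rw [norm_smul, Real.norm_eq_abs, abs_of_nonneg ha0]
    have h3 : ‖(1 - a) • (V ω - (m - n))‖ = (1 - a) * ‖V ω - (m - n)‖ := by
      rw [norm_smul, Real.norm_eq_abs, abs_of_nonneg (by linarith)]
    nlinarith [norm_nonneg (a • (X ω - m) + (1 - a) • (V ω - (m - n))),
      sq_nonneg (a * ‖X ω - m‖ - (1 - a) * ‖V ω - (m - n)‖), norm_nonneg (X ω - m),
      norm_nonneg (V ω - (m - n))]
  have hf2i : Integrable (fun ω => ‖f ω‖ ^ 2) P :=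
    (memLp_two_iff_integrable_sq_norm hfm.aestronglyMeasurable).mp hfm
  have hXc2 : Integrable (fun ω => ‖X ω - m‖ ^ 2) P :=
    (memLp_two_iff_integrable_sq_norm (hXm.sub (memLp_const m)).aestronglyMeasurable).mp
      (hXm.sub (memLp_const m))
  have hVc : MemLp (fun ω => V ω - (m - n)) 2 P := hVm.sub (memLp_const _)
  have hVc2 : Integrable (fun ω => ‖V ω - (m - n)‖ ^ 2) P :=
    (memLp_two_iff_integrable_sq_norm hVc.aestronglyMeasurable).mp hVc
  have hint : ∫ ω, ‖f ω‖ ^ 2 ∂P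
      ≤ ∫ ω, (2 * a ^ 2 * ‖X ω - m‖ ^ 2 + 2 * (1 - a) ^ 2 * ‖V ω - (m - n)‖ ^ 2) ∂P := by
    refine integral_mono hf2i ?_ hbound
    exact ((hXc2.const_mul _).add (hVc2.const_mul _))
  rw [integral_add (hXc2.const_mul _) (hVc2.const_mul _), integral_const_mul,
    integral_const_mul] at hint
  have hV2 : Integrable (fun ω => ‖V ω‖ ^ 2) P :=
    (memLp_two_iff_integrable_sq_norm hVm.aestronglyMeasurable).mp hVm
  have hVvar : ∫ ω, ‖V ω - (m - n)‖ ^ 2 ∂P ≤ C ^ 2 * D ^ 2 := by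
    calc ∫ ω, ‖V ω - (m - n)‖ ^ 2 ∂P = ∫ ω, ‖V ω - ∫ ω', V ω' ∂P‖ ^ 2 ∂P := by rw [hVint]
      _ ≤ ∫ ω, ‖V ω‖ ^ 2 ∂P := var_le_second_moment hVm
      _ ≤ C ^ 2 * D ^ 2 := hXY
  have hcn : ‖c‖ ^ 2 = (1 - a) ^ 2 * ‖u - n‖ ^ 2 := by
    rw [hc, norm_smul, Real.norm_eq_abs, mul_pow, sq_abs]
  have hvf : ∫ ω, ‖X ω - m‖ ^ 2 ∂P ≤ σ ^ 2 := hvar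
  nlinarith [sq_nonneg a, sq_nonneg (1 - a), sq_nonneg ‖u - n‖]
end
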